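/- For n ≥ k_1 + ... + k_m, the dimension of the space of S_n-invariants in Sym^{k_1}(V) ⊗ Sym^{k_2}(V) ⊗ ... ⊗ Sym^{k_m}(V) equals the number of multiset partitions of the multiset {1^{k_1}, 2^{k_2}, ..., m^{k_m}}. -/

import Mathlib

open Multiset in
lemma exists_perm_comp {α : Type*} {n : ℕ} (f g : Fin n → α)
    (h : Multiset.map f Finset.univ.val = Multiset.map g Finset.univ.val) :
    ∃ σ : Equiv.Perm (Fin n), g = f ∘ σ := by
  classical
  have hcard : ∀ a, Fintype.card {x // g x = a} = Fintype.card {x // f x = a} := by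
    intro a
    have h2 := congrArg (Multiset.count a) h
    rw [Multiset.count_map, Multiset.count_map] at h2
    rw [Fintype.card_subtype, Fintype.card_subtype]
    simp only [Finset.card, Finset.filter_val]
    simp only [eq_comm] at h2 ⊢
    omega
  have e : ∀ a, {x // g x = a} ≃ {x // f x = a} :=
    fun a => Fintype.equivOfCardEq (hcard a)
  refine ⟨Equiv.ofFiberEquiv e, ?_⟩
  funext x
  exact (Equiv.ofFiberEquiv_map e x).symm

-- replicate of a sum
lemma replicate_sum' {ι α : Type*} (s : Finset ι) (f : ι → ℕ) (a : α) :
    Multiset.replicate (∑ i ∈ s, f i) a = ∑ i ∈ s, Multiset.replicate (f i) a := by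
  classical
  induction s using Finset.induction_on with
  | empty => simp
  | insert _ _ hx ih => rw [Finset.sum_insert hx, Finset.sum_insert hx,
      Multiset.replicate_add, ih]

lemma count_sum_replicate {m : ℕ} (c : Fin m → ℕ) (j : Fin m) :
    Multiset.count j (∑ i, Multiset.replicate (c i) i) = c j := by
  classical
  rw [Multiset.count_sum']
  rw [Finset.sum_eq_single j]
  · simp
  · intro b _ hb; simp [Multiset.count_replicate]; intro hbj; exact absurd hbj hb
  · simp

lemma sum_count_replicate {m : ℕ} (s : Multiset (Fin m)) :
    ∑ j, Multiset.replicate (s.count j) j = s := by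
  classical
  conv_rhs => rw [← Multiset.toFinset_sum_count_nsmul_eq s]
  rw [← Finset.sum_subset (Finset.subset_univ s.toFinset) ?h]
  case h =>
    intro j _ hj
    rw [Multiset.count_eq_zero_of_notMem (fun hmem => hj (Multiset.mem_toFinset.2 hmem))]
    simp
  exact Finset.sum_congr rfl fun j _ => by rw [Multiset.nsmul_singleton]

/-- The basis of `Sym^{k_1}(V) ⊗ ... ⊗ Sym^{k_m}(V)` for `V = ℂ^n`: an
`m`-tuple of monomials, the `j`-th being a monomial of total degree `k_j` in
`n` variables, recorded by its exponent vector. -/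
def SymBasis (n m : ℕ) (k : Fin m → ℕ) : Type :=
  ∀ j : Fin m, {d : Fin n → ℕ // ∑ x, d x = k j}

instance symBasisFinite (n m : ℕ) (k : Fin m → ℕ) : Finite (SymBasis n m k) := by
  have : ∀ j : Fin m, Finite {d : Fin n → ℕ // ∑ x, d x = k j} := by
    intro j
    apply Finite.of_injective (fun d => (fun x => (⟨d.1 x, by
      have h1 : d.1 x ≤ ∑ y, d.1 y := Finset.single_le_sum (fun i _ => Nat.zero_le _)
        (Finset.mem_univ x)
      omega⟩ : Fin (k j + 1))))
    intro d e hde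
    ext x
    exact congrArg Fin.val (congrFun hde x)
  exact Pi.finite

/-- The space of `S_n`-invariants in `Sym^{k_1}(V) ⊗ ... ⊗ Sym^{k_m}(V)`,
realized as functions on the monomial basis, where `σ ∈ S_n` acts diagonally by
permuting the variables in each exponent vector. -/
noncomputable def symInvariants (n m : ℕ) (k : Fin m → ℕ) :
    Submodule ℂ (SymBasis n m k → ℂ) where
  carrier := {v | ∀ σ : Equiv.Perm (Fin n), ∀ p q : SymBasis n m k,
    (∀ j, (q j).1 = (p j).1 ∘ σ) → v q = v p}
  add_mem' := by
    intro u v hu hv σ p q h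
    simp only [Pi.add_apply, hu σ p q h, hv σ p q h]
  zero_mem' := fun _ _ _ _ => rfl
  smul_mem' := by
    intro c v hv σ p q h
    simp only [Pi.smul_apply, hv σ p q h]

def symSetoid (n m : ℕ) (k : Fin m → ℕ) : Setoid (SymBasis n m k) where
  r p q := ∃ σ : Equiv.Perm (Fin n), ∀ j, (q j).1 = (p j).1 ∘ σ
  iseqv := by
    constructor
    · exact fun p => ⟨1, fun j => rfl⟩
    · rintro p q ⟨σ, hσ⟩
      exact ⟨σ⁻¹, fun j => by funext x; simp [hσ j]⟩
    · rintro p q r ⟨σ, hσ⟩ ⟨τ, hτ⟩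
      exact ⟨σ * τ, fun j => by funext x; simp [hτ j, hσ j]⟩

abbrev SymOrbits (n m : ℕ) (k : Fin m → ℕ) := Quotient (symSetoid n m k)

noncomputable def invariantsEquiv (n m : ℕ) (k : Fin m → ℕ) :
    (SymOrbits n m k → ℂ) ≃ₗ[ℂ] symInvariants n m k := by
  apply LinearEquiv.ofBijective
    { toFun := fun w => ⟨fun p => w (Quotient.mk _ p), by
        intro σ p q hσ
        exact congrArg w (Quotient.sound (s := symSetoid n m k) ⟨σ, hσ⟩).symm⟩
      map_add' := fun _ _ => rfl
      map_smul' := fun _ _ => rfl }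
  constructor
  · intro w₁ w₂ hw
    funext q
    induction q using Quotient.ind with
    | _ p => exact congrFun (congrArg Subtype.val hw) p
  · rintro ⟨v, hv⟩
    refine ⟨Quotient.lift v ?_, rfl⟩
    rintro p q ⟨σ, hσ⟩
    exact (hv σ p q hσ).symm

lemma finrank_symInvariants (n m : ℕ) (k : Fin m → ℕ) :
    Module.finrank ℂ (symInvariants n m k) = Nat.card (SymOrbits n m k) := by
  classical
  have : Fintype (SymOrbits n m k) := Fintype.ofFinite _
  rw [← (invariantsEquiv n m k).finrank_eq, Module.finrank_pi, Nat.card_eq_fintype_card]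

/-- The multiset `{1^{k_1}, 2^{k_2}, ..., m^{k_m}}` on `Fin m`. -/
def theMultiset (m : ℕ) (k : Fin m → ℕ) : Multiset (Fin m) :=
  ∑ j, Multiset.replicate (k j) j

section Comb

variable {n m : ℕ} {k : Fin m → ℕ}

def colM (p : SymBasis n m k) (x : Fin n) : Multiset (Fin m) :=
  ∑ j, Multiset.replicate ((p j).1 x) j

lemma count_colM (p : SymBasis n m k) (j : Fin m) (x : Fin n) :
    (colM p x).count j = (p j).1 x :=
  count_sum_replicate _ j

def fullM (p : SymBasis n m k) : Multiset (Multiset (Fin m)) :=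
  Finset.univ.val.map (colM p)

noncomputable def partsOf (p : SymBasis n m k) : Multiset (Multiset (Fin m)) :=
  (fullM p).filter (· ≠ 0)

lemma sum_fullM (p : SymBasis n m k) : (fullM p).sum = theMultiset m k := by
  have : (fullM p).sum = ∑ x : Fin n, colM p x := rfl
  rw [this, theMultiset]
  unfold colM
  rw [Finset.sum_comm]
  exact Finset.sum_congr rfl fun j _ => by
    rw [← replicate_sum', (p j).2]

lemma sum_partsOf (p : SymBasis n m k) : (partsOf p).sum = theMultiset m k := by
  classical
  conv_rhs => rw [← sum_fullM p]
  rw [← Multiset.filter_add_not (· ≠ 0) (fullM p), Multiset.sum_add, partsOf]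
  have : ((fullM p).filter (fun a => ¬ a ≠ 0)).sum = 0 := by
    apply Multiset.sum_eq_zero
    intro a ha
    have := (Multiset.mem_filter.1 ha).2
    simpa using this
  rw [this, add_zero]

lemma mem_partsOf_ne_zero (p : SymBasis n m k) : ∀ a ∈ partsOf p, a ≠ 0 :=
  fun a ha => (Multiset.mem_filter.1 ha).2

lemma fullM_eq_of_partsOf_eq {p q : SymBasis n m k} (h : partsOf p = partsOf q) :
    fullM p = fullM q := by
  classical
  have key : ∀ r : SymBasis n m k,
      fullM r = partsOf r + Multiset.replicate (n - Multiset.card (partsOf r)) 0 := by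
    intro r
    have hsplit := (Multiset.filter_add_not (· ≠ 0) (fullM r)).symm
    have hzero : (fullM r).filter (fun a => ¬ a ≠ 0) =
        Multiset.replicate (Multiset.card ((fullM r).filter (fun a => ¬ a ≠ 0))) 0 := by
      apply Multiset.eq_replicate_card.2
      intro a ha
      have := (Multiset.mem_filter.1 ha).2
      simpa using this
    have hcardfull : Multiset.card (fullM r) = n := by
      rw [fullM, Multiset.card_map]
      simp
    have hcards : Multiset.card (partsOf r) +
        Multiset.card ((fullM r).filter (fun a => ¬ a ≠ 0)) = n := by
      have h2 := congrArg Multiset.card hsplit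
      rw [Multiset.card_add] at h2
      unfold partsOf
      omega
    calc fullM r = partsOf r + (fullM r).filter (fun a => ¬ a ≠ 0) := hsplit
      _ = partsOf r + Multiset.replicate (n - Multiset.card (partsOf r)) 0 := by
          rw [hzero]; congr 2; omega
  rw [key p, key q, h]

lemma equiv_of_partsOf_eq {p q : SymBasis n m k} (h : partsOf p = partsOf q) :
    ∃ σ : Equiv.Perm (Fin n), ∀ j, (q j).1 = (p j).1 ∘ σ := by
  have hfull := fullM_eq_of_partsOf_eq h
  obtain ⟨σ, hσ⟩ := exists_perm_comp (colM p) (colM q) hfull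
  refine ⟨σ, fun j => ?_⟩
  funext x
  have h1 := count_colM q j x
  have h2 := count_colM p j (σ x)
  have h3 : colM q x = colM p (σ x) := congrFun hσ x
  show (q j).1 x = (p j).1 (σ x)
  rw [← h1, ← h2, h3]

lemma partsOf_perm_invariant (p q : SymBasis n m k)
    (hσ : ∃ σ : Equiv.Perm (Fin n), ∀ j, (q j).1 = (p j).1 ∘ σ) :
    partsOf p = partsOf q := by
  obtain ⟨σ, hσ⟩ := hσ
  have hc : colM q = colM p ∘ σ := by
    funext x
    unfold colM
    exact Finset.sum_congr rfl fun j _ => by rw [hσ j]; rfl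
  have : fullM q = fullM p := by
    have h4 : Multiset.map (⇑σ) Finset.univ.val = Finset.univ.val := by
      have h5 := congrArg Finset.val (Finset.map_univ_equiv σ)
      rw [Finset.map_val] at h5
      exact h5
    rw [fullM, fullM, hc, ← Multiset.map_map, h4]
  rw [partsOf, partsOf, this]

end Comb

lemma ofFn_getD {α : Type*} (L : List α) (n : ℕ) (hL : L.length ≤ n) (d : α) :
    List.ofFn (fun i : Fin n => L.getD i d) = L ++ List.replicate (n - L.length) d := by
  apply List.ext_getElem
  · simp; omega
  · intro i h1 h2
    simp only [List.getElem_ofFn]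
    by_cases hi : i < L.length
    · rw [List.getElem_append_left hi, List.getD_eq_getElem L d hi]
    · rw [List.getElem_append_right (Nat.le_of_not_lt hi), List.getElem_replicate,
        List.getD_eq_default L d (Nat.le_of_not_lt hi)]

lemma card_le_card_sum {α : Type*} (P : Multiset (Multiset α)) (hne : ∀ p ∈ P, p ≠ 0) :
    Multiset.card P ≤ Multiset.card P.sum := by
  induction P using Multiset.induction_on with
  | empty => simp
  | cons a P ih =>
    rw [Multiset.card_cons, Multiset.sum_cons, Multiset.card_add]
    have ha : a ≠ 0 := hne a (Multiset.mem_cons_self a P)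
    have : 0 < Multiset.card a := Multiset.card_pos.2 ha
    have := ih (fun p hp => hne p (Multiset.mem_cons_of_mem hp))
    omega

lemma exists_symBasis {n m : ℕ} {k : Fin m → ℕ} (h : (∑ j, k j) ≤ n)
    (P : Multiset (Multiset (Fin m)))
    (hne : ∀ p ∈ P, p ≠ 0) (hsum : P.sum = theMultiset m k) :
    ∃ p : SymBasis n m k, partsOf p = P := by
  classical
  set L := P.toList with hLdef
  have hLP : (↑L : Multiset (Multiset (Fin m))) = P := P.coe_toList
  have hcard_tm : Multiset.card (theMultiset m k) = ∑ j, k j := by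
    rw [theMultiset, Multiset.card_sum]
    exact Finset.sum_congr rfl fun j _ => Multiset.card_replicate _ _
  have hlen : L.length ≤ n := by
    have h1 : Multiset.card P ≤ Multiset.card P.sum := card_le_card_sum P hne
    have h2 : Multiset.card P = L.length := by rw [← hLP]; rfl
    rw [hsum, hcard_tm] at h1
    omega
  set c : Fin n → Multiset (Fin m) := fun x => L.getD x 0 with hcdef
  have hmapc : Multiset.map c Finset.univ.val =
      (↑L : Multiset (Multiset (Fin m))) + Multiset.replicate (n - L.length) 0 := by
    rw [Fin.univ_val_map, hcdef, ofFn_getD L n hlen 0]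
    rfl
  have hsumc : ∑ x, c x = theMultiset m k := by
    have h0 : ∑ x, c x = (Multiset.map c Finset.univ.val).sum := rfl
    rw [h0, hmapc, Multiset.sum_add, Multiset.sum_replicate, smul_zero, add_zero,
      ← hsum, ← hLP]
  have hdeg : ∀ j, ∑ x, Multiset.count j (c x) = k j := by
    intro j
    have h1 : ∑ x, Multiset.count j (c x) = Multiset.count j (∑ x, c x) :=
      (Multiset.count_sum').symm
    rw [h1, hsumc, theMultiset, count_sum_replicate]
  refine ⟨fun j => ⟨fun x => (c x).count j, hdeg j⟩, ?_⟩
  have hcol : colM (fun j => (⟨fun x => (c x).count j, hdeg j⟩ :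
      {d : Fin n → ℕ // ∑ x, d x = k j}) : SymBasis n m k) = c :=
    funext fun x => sum_count_replicate (c x)
  unfold partsOf fullM
  rw [hcol, hmapc, Multiset.filter_add]
  have h1 : Multiset.filter (· ≠ 0) (↑L : Multiset (Multiset (Fin m))) = ↑L :=
    Multiset.filter_eq_self.2 (fun a ha => hne a (by rwa [hLP] at ha))
  have h2 : Multiset.filter (· ≠ 0) (Multiset.replicate (n - L.length)
      (0 : Multiset (Fin m))) = 0 := by
    rw [Multiset.filter_eq_nil]
    intro a ha
    rw [Multiset.eq_of_mem_replicate ha]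
    simp
  rw [h1, h2, add_zero, hLP]

/-- For `n ≥ k_1 + ... + k_m`, the dimension of the space of `S_n`-invariants
in `Sym^{k_1}(V) ⊗ ... ⊗ Sym^{k_m}(V)` equals the number of multiset
partitions of the multiset `{1^{k_1}, ..., m^{k_m}}`. -/
theorem stmt10 (n m : ℕ) (k : Fin m → ℕ) (h : n ≥ ∑ j, k j) :
    Module.finrank ℂ (symInvariants n m k) =
      Nat.card {P : Multiset (Multiset (Fin m)) //
        (∀ p ∈ P, p ≠ 0) ∧ P.sum = theMultiset m k} := by
  rw [finrank_symInvariants]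
  apply Nat.card_congr
  refine Equiv.ofBijective (Quotient.lift (fun p : SymBasis n m k =>
      (⟨partsOf p, mem_partsOf_ne_zero p, sum_partsOf p⟩ :
        {P : Multiset (Multiset (Fin m)) // (∀ p ∈ P, p ≠ 0) ∧ P.sum = theMultiset m k}))
      (fun p q hpq => Subtype.ext (partsOf_perm_invariant p q hpq))) ⟨?_, ?_⟩
  · exact fun o₁ o₂ => Quotient.inductionOn₂ o₁ o₂ (fun p q hpq =>
      Quotient.sound (equiv_of_partsOf_eq (congrArg Subtype.val hpq)))
  · rintro ⟨P, hne, hsum⟩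
    obtain ⟨p, hp⟩ := exists_symBasis h P hne hsum
    exact ⟨Quotient.mk _ p, Subtype.ext hp⟩
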